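/- Let h : ℝ × [-1,0] → ℝ be continuously differentiable with inf_{ℝ×[-1,0]} ∂_s h > 0 and h(r,-1) = 0 for all r ∈ ℝ. Then the map G(r,s) := (r, h(r,s) - 1) is injective on ℝ × [-1,0], its image is exactly the set {(x,y) ∈ ℝ² : -1 ≤ y ≤ h(x,0) - 1}, and G restricts to a C¹ diffeomorphism from the open strip ℝ × (-1,0) onto the open set {(x,y) : -1 < y < h(x,0) - 1}; in particular the first component of G⁻¹ is (x,y) ↦ x, and its second component is a C¹ function of (x,y). -/

import Mathlib

/-- **Diffeomorphism step in the equivalence theorem** (Theorem 2.2,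
(iii) ⟹ (ii)). Let `h = h(r,s)` be `C¹` on the strip `ℝ × [-1,0]` with
`∂_s h ≥ δ > 0` and `h(r,-1) = 0`. Then `G(r,s) = (r, h(r,s) - 1)` is injective
on the closed strip, its image is exactly `{(x,y) : -1 ≤ y ≤ h(x,0) - 1}`, and
`G` restricts to a `C¹` diffeomorphism from the open strip `ℝ × (-1,0)` onto
the open set `{(x,y) : -1 < y < h(x,0) - 1}`; the first component of `G⁻¹` is
`(x,y) ↦ x` and its second component is a `C¹` function of `(x,y)`. -/
theorem height_function_diffeomorphism
    (h : ℝ → ℝ → ℝ)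
    (hC1 : ContDiffOn ℝ 1 (fun p : ℝ × ℝ => h p.1 p.2)
      (Set.univ ×ˢ Set.Icc (-1 : ℝ) 0))
    (δ : ℝ) (hδ : 0 < δ)
    (hs : ℝ → ℝ → ℝ)
    (hders : ∀ r : ℝ, ∀ s ∈ Set.Icc (-1 : ℝ) 0,
      HasDerivWithinAt (fun s' => h r s') (hs r s) (Set.Icc (-1 : ℝ) 0) s ∧
      δ ≤ hs r s)
    (hbot : ∀ r : ℝ, h r (-1) = 0)
    (G : ℝ × ℝ → ℝ × ℝ) (hG : ∀ p, G p = (p.1, h p.1 p.2 - 1)) :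
    -- G is injective on the closed strip
    Set.InjOn G (Set.univ ×ˢ Set.Icc (-1 : ℝ) 0) ∧
    -- its image is exactly {(x,y) : -1 ≤ y ≤ h(x,0) - 1}
    G '' (Set.univ ×ˢ Set.Icc (-1 : ℝ) 0)
      = {q : ℝ × ℝ | -1 ≤ q.2 ∧ q.2 ≤ h q.1 0 - 1} ∧
    -- G : open strip → open fluid region is a C¹ diffeomorphism
    (G '' (Set.univ ×ˢ Set.Ioo (-1 : ℝ) 0)
        = {q : ℝ × ℝ | -1 < q.2 ∧ q.2 < h q.1 0 - 1} ∧
      ∃ Ginv : ℝ × ℝ → ℝ × ℝ,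
        ContDiffOn ℝ 1 Ginv {q : ℝ × ℝ | -1 < q.2 ∧ q.2 < h q.1 0 - 1} ∧
        (∀ p ∈ Set.univ ×ˢ Set.Ioo (-1 : ℝ) 0, Ginv (G p) = p) ∧
        (∀ q ∈ {q : ℝ × ℝ | -1 < q.2 ∧ q.2 < h q.1 0 - 1},
          G (Ginv q) = q ∧ Ginv q ∈ Set.univ ×ˢ Set.Ioo (-1 : ℝ) 0 ∧
          (Ginv q).1 = q.1)) := by
  classical
  have hIcc : ∀ r, ContinuousOn (h r) (Set.Icc (-1 : ℝ) 0) :=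
    fun r s hsm => ((hders r s hsm).1).continuousWithinAt
  -- strict monotonicity in s
  have hmono : ∀ r, StrictMonoOn (h r) (Set.Icc (-1 : ℝ) 0) := by
    intro r
    apply strictMonoOn_of_hasDerivWithinAt_pos (convex_Icc _ _) (hIcc r)
      (f' := fun s => hs r s)
    · intro s hsm
      exact ((hders r s (interior_subset hsm)).1).mono interior_subset
    · intro s hsm
      exact lt_of_lt_of_le hδ (hders r s (interior_subset hsm)).2
  have hinj : ∀ r, Set.InjOn (h r) (Set.Icc (-1 : ℝ) 0) := fun r => (hmono r).injOn
  -- IVT existence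
  have hex : ∀ x y : ℝ, 0 ≤ y → y ≤ h x 0 → ∃ s ∈ Set.Icc (-1 : ℝ) 0, h x s = y := by
    intro x y h1 h2
    have hsub := intermediate_value_Icc (by norm_num : (-1 : ℝ) ≤ 0) (hIcc x)
    have hy : y ∈ Set.Icc (h x (-1)) (h x 0) := by rw [hbot]; exact ⟨h1, h2⟩
    obtain ⟨s, hsm, hval⟩ := hsub hy
    exact ⟨s, hsm, hval⟩
  -- definition of the second component of the inverse
  set σ : ℝ × ℝ → ℝ := fun q =>
    if H : ∃ s ∈ Set.Icc (-1 : ℝ) 0, h q.1 s = q.2 + 1 then H.choose else 0 with hσdef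
  have hσ_spec : ∀ q : ℝ × ℝ, (∃ s ∈ Set.Icc (-1 : ℝ) 0, h q.1 s = q.2 + 1) →
      σ q ∈ Set.Icc (-1 : ℝ) 0 ∧ h q.1 (σ q) = q.2 + 1 := by
    intro q H
    simp only [hσdef, dif_pos H]
    exact ⟨H.choose_spec.1, H.choose_spec.2⟩
  have hσ_unique : ∀ q : ℝ × ℝ, ∀ s ∈ Set.Icc (-1 : ℝ) 0, h q.1 s = q.2 + 1 → σ q = s := by
    intro q s hsm hval
    obtain ⟨hm, hv⟩ := hσ_spec q ⟨s, hsm, hval⟩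
    exact hinj q.1 hm hsm (hv.trans hval.symm)
  set Ginv : ℝ × ℝ → ℝ × ℝ := fun q => (q.1, σ q) with hGinvdef
  -- injectivity
  have injG : Set.InjOn G (Set.univ ×ˢ Set.Icc (-1 : ℝ) 0) := by
    rintro ⟨r, s⟩ ⟨-, hs1⟩ ⟨r', s'⟩ ⟨-, hs2⟩ heq
    rw [hG, hG] at heq
    simp only [Prod.mk.injEq] at heq
    obtain ⟨h1, h2⟩ := heq
    subst h1
    have : h r s = h r s' := by linarith
    exact Prod.ext rfl (hinj r hs1 hs2 this)
  -- closed image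
  have himage : G '' (Set.univ ×ˢ Set.Icc (-1 : ℝ) 0)
      = {q : ℝ × ℝ | -1 ≤ q.2 ∧ q.2 ≤ h q.1 0 - 1} := by
    ext q
    constructor
    · rintro ⟨⟨r, s⟩, ⟨-, hsm⟩, rfl⟩
      rw [hG]
      have hm1 : (-1 : ℝ) ∈ Set.Icc (-1 : ℝ) 0 := by norm_num
      have hm0 : (0 : ℝ) ∈ Set.Icc (-1 : ℝ) 0 := by norm_num
      have hlow : h r (-1) ≤ h r s := (hmono r).monotoneOn hm1 hsm hsm.1
      have hhigh : h r s ≤ h r 0 := (hmono r).monotoneOn hsm hm0 hsm.2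
      have hb := hbot r
      constructor <;> simp only [] <;> linarith
    · rintro ⟨h1, h2⟩
      obtain ⟨s, hsm, hval⟩ := hex q.1 (q.2 + 1) (by linarith) (by linarith)
      refine ⟨(q.1, s), ⟨trivial, hsm⟩, ?_⟩
      rw [hG]
      exact Prod.ext rfl (by simp [hval])
  -- open image
  have himageo : G '' (Set.univ ×ˢ Set.Ioo (-1 : ℝ) 0)
      = {q : ℝ × ℝ | -1 < q.2 ∧ q.2 < h q.1 0 - 1} := by
    ext q
    constructor
    · rintro ⟨⟨r, s⟩, ⟨-, hsm⟩, rfl⟩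
      rw [hG]
      have hm1 : (-1 : ℝ) ∈ Set.Icc (-1 : ℝ) 0 := by norm_num
      have hm0 : (0 : ℝ) ∈ Set.Icc (-1 : ℝ) 0 := by norm_num
      have hsm' : s ∈ Set.Icc (-1 : ℝ) 0 := Set.Ioo_subset_Icc_self hsm
      have hlow : h r (-1) < h r s := hmono r hm1 hsm' hsm.1
      have hhigh : h r s < h r 0 := hmono r hsm' hm0 hsm.2
      have hb := hbot r
      constructor <;> simp only [] <;> linarith
    · rintro ⟨h1, h2⟩
      obtain ⟨s, hsm, hval⟩ := hex q.1 (q.2 + 1) (by linarith) (by linarith)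
      have hm1 : (-1 : ℝ) ∈ Set.Icc (-1 : ℝ) 0 := by norm_num
      have hm0 : (0 : ℝ) ∈ Set.Icc (-1 : ℝ) 0 := by norm_num
      have hs1 : -1 < s := by
        rcases lt_or_eq_of_le hsm.1 with hlt | heq
        · exact hlt
        · exfalso; rw [← heq, hbot] at hval; linarith
      have hs2 : s < 0 := by
        rcases lt_or_eq_of_le hsm.2 with hlt | heq
        · exact hlt
        · exfalso; rw [heq] at hval; linarith
      refine ⟨(q.1, s), ⟨trivial, hs1, hs2⟩, ?_⟩
      rw [hG]
      exact Prod.ext rfl (by simp [hval])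
  -- basic inverse facts
  have hleft : ∀ p ∈ Set.univ ×ˢ Set.Ioo (-1 : ℝ) 0, Ginv (G p) = p := by
    rintro ⟨r, s⟩ ⟨-, hsm⟩
    have hsm' : s ∈ Set.Icc (-1 : ℝ) 0 := Set.Ioo_subset_Icc_self hsm
    rw [hG]
    have : σ (r, h r s - 1) = s := hσ_unique (r, h r s - 1) s hsm' (by ring)
    simp [hGinvdef, this]
  have hrightall : ∀ q ∈ {q : ℝ × ℝ | -1 < q.2 ∧ q.2 < h q.1 0 - 1},
      G (Ginv q) = q ∧ Ginv q ∈ Set.univ ×ˢ Set.Ioo (-1 : ℝ) 0 ∧ (Ginv q).1 = q.1 := by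
    rintro q ⟨h1, h2⟩
    have H : ∃ s ∈ Set.Icc (-1 : ℝ) 0, h q.1 s = q.2 + 1 :=
      hex q.1 (q.2 + 1) (by linarith) (by linarith)
    obtain ⟨hm, hv⟩ := hσ_spec q H
    have hσ1 : -1 < σ q := by
      rcases lt_or_eq_of_le hm.1 with hlt | heq
      · exact hlt
      · exfalso; rw [← heq, hbot] at hv; linarith
    have hσ2 : σ q < 0 := by
      rcases lt_or_eq_of_le hm.2 with hlt | heq
      · exact hlt
      · exfalso; rw [heq] at hv; linarith
    refine ⟨?_, ⟨trivial, hσ1, hσ2⟩, rfl⟩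
    rw [hG]
    exact Prod.ext rfl (by simp [hGinvdef, hv])
  -- smoothness of the inverse
  have hsmooth : ContDiffOn ℝ 1 Ginv {q : ℝ × ℝ | -1 < q.2 ∧ q.2 < h q.1 0 - 1} := by
    intro q0 hq0
    obtain ⟨hGq0, hp0strip, -⟩ := hrightall q0 hq0
    set p0 : ℝ × ℝ := Ginv q0 with hp0def
    obtain ⟨-, hp0Ioo⟩ := hp0strip
    have hp0Icc : p0 ∈ Set.univ ×ˢ Set.Icc (-1 : ℝ) 0 :=
      ⟨trivial, Set.Ioo_subset_Icc_self hp0Ioo⟩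
    have hopen : IsOpen (Set.univ ×ˢ Set.Ioo (-1 : ℝ) 0 : Set (ℝ × ℝ)) :=
      isOpen_univ.prod isOpen_Ioo
    have hnhds : Set.univ ×ˢ Set.Icc (-1 : ℝ) 0 ∈ nhds p0 :=
      Filter.mem_of_superset (hopen.mem_nhds ⟨trivial, hp0Ioo⟩)
        (Set.prod_mono_right Set.Ioo_subset_Icc_self)
    have hHat : ContDiffAt ℝ 1 (fun p : ℝ × ℝ => h p.1 p.2) p0 :=
      (hC1 p0 hp0Icc).contDiffAt hnhds
    set A : (ℝ × ℝ) →L[ℝ] ℝ := fderiv ℝ (fun p : ℝ × ℝ => h p.1 p.2) p0 with hAdef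
    have hA : HasFDerivAt (fun p : ℝ × ℝ => h p.1 p.2) A p0 :=
      (hHat.differentiableAt one_ne_zero).hasFDerivAt
    -- the partial derivative in s is at least δ
    have hb : (0 : ℝ) < A (0, 1) := by
      have hcurve : HasDerivAt (fun t : ℝ => ((p0.1, t) : ℝ × ℝ)) ((0 : ℝ), (1 : ℝ)) p0.2 :=
        (hasDerivAt_const _ _).prodMk (hasDerivAt_id _)
      have hcomp : HasDerivAt (fun t => h p0.1 t) (A (0, 1)) p0.2 :=
        hA.comp_hasDerivAt p0.2 hcurve
      have hIccnhds : Set.Icc (-1 : ℝ) 0 ∈ nhds p0.2 :=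
        Icc_mem_nhds hp0Ioo.1 hp0Ioo.2
      have hd := (hders p0.1 p0.2 (Set.Ioo_subset_Icc_self hp0Ioo)).1
      have hd' : HasDerivAt (fun t => h p0.1 t) (hs p0.1 p0.2) p0.2 := hd.hasDerivAt hIccnhds
      have : A (0, 1) = hs p0.1 p0.2 := hcomp.unique hd'
      rw [this]
      exact lt_of_lt_of_le hδ (hders p0.1 p0.2 (Set.Ioo_subset_Icc_self hp0Ioo)).2
    have hA2 : ∀ y : ℝ, A (0, y) = y * A (0, 1) := by
      intro y
      have : ((0 : ℝ), y) = y • ((0 : ℝ), (1 : ℝ)) := by simp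
      rw [this, map_smul, smul_eq_mul]
    have hAsplit : ∀ p : ℝ × ℝ, A p = A (p.1, 0) + p.2 * A (0, 1) := by
      intro p
      rw [← hA2, ← map_add]
      norm_num
    -- the invertible derivative of G at p0
    let eL : (ℝ × ℝ) ≃ₗ[ℝ] (ℝ × ℝ) :=
      { toFun := fun p => (p.1, A p)
        invFun := fun q => (q.1, (q.2 - A (q.1, 0)) / A (0, 1))
        map_add' := fun p q => by simp [Prod.ext_iff, map_add]
        map_smul' := fun c p => Prod.ext rfl
          (by show A (c • p) = c * A p; rw [map_smul, smul_eq_mul])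
        left_inv := fun p => by
          refine Prod.ext rfl ?_
          simp only []
          rw [hAsplit p]
          field_simp
          ring
        right_inv := fun q => by
          refine Prod.ext rfl ?_
          simp only []
          rw [hAsplit (q.1, (q.2 - A (q.1, 0)) / A (0, 1))]
          field_simp
          ring }
    let e : (ℝ × ℝ) ≃L[ℝ] (ℝ × ℝ) := eL.toContinuousLinearEquiv
    have hGfun : G = fun p : ℝ × ℝ => (p.1, h p.1 p.2 - 1) := funext hG
    have hGder : HasFDerivAt G (e : (ℝ × ℝ) →L[ℝ] (ℝ × ℝ)) p0 := by
      have h1 : HasFDerivAt (fun p : ℝ × ℝ => (p.1, h p.1 p.2 - 1))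
          ((ContinuousLinearMap.fst ℝ ℝ ℝ).prod A) p0 :=
        (hasFDerivAt_fst).prodMk (hA.sub_const 1)
      have h2 : (e : (ℝ × ℝ) →L[ℝ] (ℝ × ℝ)) = (ContinuousLinearMap.fst ℝ ℝ ℝ).prod A :=
        ContinuousLinearMap.ext fun p => rfl
      rw [hGfun, h2]
      exact h1
    have hGc : ContDiffAt ℝ 1 G p0 := by
      rw [hGfun]
      exact contDiffAt_fst.prodMk (hHat.sub contDiffAt_const)
    have hstrict : HasStrictFDerivAt G (e : (ℝ × ℝ) →L[ℝ] (ℝ × ℝ)) p0 :=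
      hGc.hasStrictFDerivAt' hGder one_ne_zero
    -- the local inverse given by the inverse function theorem
    have hcd : ContDiffAt ℝ 1 (hstrict.localInverse G e p0) q0 := by
      have := hGc.to_localInverse hGder one_ne_zero
      rwa [hGq0] at this
    have hlinv_q0 : hstrict.localInverse G e p0 q0 = p0 := by
      have := hstrict.localInverse_apply_image
      rwa [hGq0] at this
    have hcont : ContinuousAt (hstrict.localInverse G e p0) q0 := by
      have := hstrict.localInverse_continuousAt
      rwa [hGq0] at this
    have hev1 : ∀ᶠ q in nhds q0, G (hstrict.localInverse G e p0 q) = q := by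
      have := hstrict.eventually_right_inverse
      rwa [hGq0] at this
    have hev2 : ∀ᶠ q in nhds q0,
        hstrict.localInverse G e p0 q ∈ Set.univ ×ˢ Set.Ioo (-1 : ℝ) 0 := by
      apply hcont.eventually_mem
      rw [hlinv_q0]
      exact hopen.mem_nhds ⟨trivial, hp0Ioo⟩
    have hevEq : Ginv =ᶠ[nhds q0] hstrict.localInverse G e p0 := by
      filter_upwards [hev1, hev2] with q hq1 hq2
      set p := hstrict.localInverse G e p0 q with hpdef
      obtain ⟨-, hpIoo⟩ := hq2
      have hpIcc : p.2 ∈ Set.Icc (-1 : ℝ) 0 := Set.Ioo_subset_Icc_self hpIoo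
      rw [hG] at hq1
      rw [Prod.ext_iff] at hq1
      obtain ⟨hq11, hq12⟩ := hq1
      simp only [] at hq11 hq12
      have hval : h q.1 p.2 = q.2 + 1 := by rw [← hq11]; linarith
      have hσq : σ q = p.2 := hσ_unique q p.2 hpIcc hval
      rw [hGinvdef]
      exact Prod.ext hq11.symm hσq
    exact (hcd.congr_of_eventuallyEq hevEq).contDiffWithinAt
  exact ⟨injG, himage, himageo, Ginv, hsmooth, hleft, hrightall⟩
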